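/- Let N ∈ ℕ, N ≥ 1, θ ∈ ℝ with cos θ ≠ 0, and α : ℤ → ℝ with α_{x+1} − α_x ≡ 2π/N (mod 2π). Define D_x = [[e^{iπ/N}cos θ, e^{iα_x}sin θ],[e^{−iα_x}sin θ, −e^{−iπ/N}cos θ]]. Then for each x, D_{x+1} D_x = diag(e^{2πi/N}, e^{−2πi/N}). -/
import Mathlib

open Complex Matrix

theorem stmt_5 (N : ℕ) (hN : 1 ≤ N) (θ : ℝ) (hcos : Real.cos θ ≠ 0)
    (α : ℤ → ℝ)
    (hα : ∀ x : ℤ, ∃ k : ℤ, α (x + 1) - α x = 2 * Real.pi / N + 2 * Real.pi * k)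
    (D : ℤ → Matrix (Fin 2) (Fin 2) ℂ)
    (hD : ∀ x : ℤ, D x =
      !![Complex.exp (Complex.I * (Real.pi / N)) * Real.cos θ,
         Complex.exp (Complex.I * α x) * Real.sin θ;
         Complex.exp (-Complex.I * α x) * Real.sin θ,
         -Complex.exp (-Complex.I * (Real.pi / N)) * Real.cos θ])
    (x : ℤ) :
    D (x + 1) * D x =
      !![Complex.exp (2 * Real.pi * Complex.I / N), 0;
         0, Complex.exp (-(2 * Real.pi * Complex.I) / N)] := by
  obtain ⟨k, hk⟩ := hα x
  have hk' : (α (x + 1) : ℂ) = (α x : ℂ) + 2 * Real.pi / N + 2 * Real.pi * k := by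
    have := congrArg (Complex.ofReal) hk
    push_cast at this ⊢
    linear_combination this
  have hexpk : Complex.exp (Complex.I * (2 * Real.pi * k)) = 1 := by
    rw [show Complex.I * (2 * Real.pi * (k:ℂ)) = (k:ℤ) * (2 * Real.pi * Complex.I) by push_cast; ring]
    exact Complex.exp_int_mul_two_pi_mul_I k
  have hexpk' : Complex.exp (-(Complex.I * (2 * Real.pi * k))) = 1 := by
    rw [show -(Complex.I * (2 * Real.pi * (k:ℂ))) = (-k:ℤ) * (2 * Real.pi * Complex.I) by push_cast; ring]
    exact Complex.exp_int_mul_two_pi_mul_I (-k)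
  have h1 : Complex.exp (Complex.I * α (x + 1)) =
      Complex.exp (Complex.I * α x) * Complex.exp (Complex.I * (2 * Real.pi / N)) := by
    rw [hk', show Complex.I * ((α x : ℂ) + 2 * Real.pi / N + 2 * Real.pi * k)
        = Complex.I * α x + Complex.I * (2 * Real.pi / N) + Complex.I * (2 * Real.pi * k) by ring,
      Complex.exp_add, Complex.exp_add, hexpk, mul_one]
  have h2 : Complex.exp (-(Complex.I * α (x + 1))) =
      Complex.exp (-(Complex.I * α x)) * Complex.exp (-(Complex.I * (2 * Real.pi / N))) := by
    rw [hk', show -(Complex.I * ((α x : ℂ) + 2 * Real.pi / N + 2 * Real.pi * k))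
        = -(Complex.I * α x) + -(Complex.I * (2 * Real.pi / N)) + -(Complex.I * (2 * Real.pi * k)) by ring,
      Complex.exp_add, Complex.exp_add, hexpk', mul_one]
  have hpyth : Complex.cos θ ^ 2 + Complex.sin θ ^ 2 = 1 := by
    rw [add_comm]; exact Complex.sin_sq_add_cos_sq _
  have hpp : Complex.exp (Complex.I * (Real.pi / N)) * Complex.exp (Complex.I * (Real.pi / N))
      = Complex.exp (Complex.I * (2 * Real.pi / N)) := by
    rw [← Complex.exp_add]; ring_nf
  have hpp' : Complex.exp (-(Complex.I * (Real.pi / N))) * Complex.exp (-(Complex.I * (Real.pi / N)))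
      = Complex.exp (-(Complex.I * (2 * Real.pi / N))) := by
    rw [← Complex.exp_add]; ring_nf
  have hainv : Complex.exp (Complex.I * α x) * Complex.exp (-(Complex.I * α x)) = 1 := by
    rw [← Complex.exp_add, add_neg_cancel, Complex.exp_zero]
  have hEe' : Complex.exp (Complex.I * (2 * Real.pi / N)) * Complex.exp (-(Complex.I * (Real.pi / N)))
      = Complex.exp (Complex.I * (Real.pi / N)) := by
    rw [← Complex.exp_add]; ring_nf
  have hE'e : Complex.exp (-(Complex.I * (2 * Real.pi / N))) * Complex.exp (Complex.I * (Real.pi / N))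
      = Complex.exp (-(Complex.I * (Real.pi / N))) := by
    rw [← Complex.exp_add]; ring_nf
  have he1 : Complex.exp (2 * Real.pi * Complex.I / N) = Complex.exp (Complex.I * (2 * Real.pi / N)) := by
    ring_nf
  have he2 : Complex.exp (-(2 * Real.pi * Complex.I) / N) = Complex.exp (-(Complex.I * (2 * Real.pi / N))) := by
    ring_nf
  rw [hD, hD]
  ext i j
  fin_cases i <;> fin_cases j <;>
    simp [Matrix.mul_apply, Fin.sum_univ_succ, h1, h2, he1, he2]
  · linear_combination (Complex.cos θ ^ 2) * hpp +
      Complex.exp (Complex.I * (2 * Real.pi / N)) * Complex.sin θ ^ 2 * hainv +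
      Complex.exp (Complex.I * (2 * Real.pi / N)) * hpyth
  · linear_combination (-(Complex.cos θ * Complex.sin θ * Complex.exp (Complex.I * α x))) * hEe'
  · linear_combination (Complex.cos θ * Complex.sin θ * Complex.exp (-(Complex.I * α x))) * hE'e
  · linear_combination (Complex.cos θ ^ 2) * hpp' +
      Complex.exp (-(Complex.I * (2 * Real.pi / N))) * Complex.sin θ ^ 2 * hainv +
      Complex.exp (-(Complex.I * (2 * Real.pi / N))) * hpyth
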